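/- arXiv:2603.12535 — 2 statements merged into one kernel-verified Lean document; each statement's English description precedes it below -/
import Mathlib

section
/- For every x ∈ {0,1}⁴ with x₁ = 0 and s ∈ {+1,−1}, one has Π_{Bb}(|ψ_s⟩_x ⊗ |φ⁺⟩_{ab}) = (1/√2)|Ψ_{s,x}⟩, and the 16 states |Ψ_{s,x}⟩ form an orthonormal family in (ℂ²)^{⊗4} ⊗ ℂ²_a ⊗ ℂ²_b. (Step 1 of the proof of Theorem 1: the measurement outcome M₁,₁ preserves orthogonality and occurs with nonzero probability on every GHZ basis state.) -/
noncomputable section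

open scoped InnerProductSpace


/-- View a coefficient function as a vector of the Euclidean (Hilbert) space. -/
def ofFun {ι : Type*} [Fintype ι] (f : ι → ℂ) : EuclideanSpace ℂ ι := WithLp.toLp 2 f

/-- Transport an endomorphism of the coefficient functions to the Euclidean space. -/
def toE {ι : Type*} [Fintype ι] (T : (ι → ℂ) →ₗ[ℂ] (ι → ℂ)) :
    Module.End ℂ (EuclideanSpace ℂ ι) :=
  (WithLp.linearEquiv 2 ℂ (ι → ℂ)).symm.toLinearMap ∘ₗ T ∘ₗ
    (WithLp.linearEquiv 2 ℂ (ι → ℂ)).toLinearMap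

open Classical in
/-- Diagonal orthogonal projection keeping exactly the basis vectors whose index
satisfies `f`. -/
def diagP {ι : Type*} [Fintype ι] (f : ι → Prop) : Module.End ℂ (EuclideanSpace ℂ ι) :=
  toE (LinearMap.pi fun i => (if f i then (1 : ℂ) else 0) • LinearMap.proj i)

/-- The linear map induced by a self-inverse permutation `σ` of the basis indices:
it sends the basis vector `|x⟩` to `|σ x⟩`. -/
def permE {ι : Type*} [Fintype ι] (σ : ι → ι) : Module.End ℂ (EuclideanSpace ℂ ι) :=
  toE (LinearMap.funLeft ℂ ℂ σ)

/-- Tensor product of two vectors, realized on the product index set. -/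
def tensE {ι κ : Type*} [Fintype ι] [Fintype κ]
    (u : EuclideanSpace ℂ ι) (w : EuclideanSpace ℂ κ) : EuclideanSpace ℂ (ι × κ) :=
  ofFun fun p => u p.1 * w p.2

/-- Bitwise complement of a bit string. -/
def bcompl {n : ℕ} (x : Fin n → Fin 2) : Fin n → Fin 2 := fun i => x i + 1

/-- The sign `+1` or `−1`, indexed by a Boolean. -/
def sgn (s : Bool) : ℂ := if s then 1 else -1

/-- Computational basis vector `|x⟩` of the `n`-qubit space. -/
def ketQ {n : ℕ} (x : Fin n → Fin 2) : EuclideanSpace ℂ (Fin n → Fin 2) :=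
  EuclideanSpace.single x 1

/-- The GHZ basis state `|ψ_s⟩_x = (|x⟩ + s|x̄⟩)/√2`. -/
def ghz {n : ℕ} (s : Bool) (x : Fin n → Fin 2) : EuclideanSpace ℂ (Fin n → Fin 2) :=
  (Real.sqrt 2 : ℂ)⁻¹ • (ketQ x + sgn s • ketQ (bcompl x))

/-- The four main qubits `A,B,C,D` (positions `0,1,2,3`) together with the two
ancilla qubits `a,b` (positions `0,1` of the second factor). -/
abbrev K4 : Type := EuclideanSpace ℂ ((Fin 4 → Fin 2) × (Fin 2 → Fin 2))

/-- Basis vector of the two ancilla qubits `a, b`. -/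
def ket2 (z : Fin 2 → Fin 2) : EuclideanSpace ℂ (Fin 2 → Fin 2) :=
  EuclideanSpace.single z 1

/-- The EPR state `|φ⁺⟩_{ab} = (|00⟩ + |11⟩)/√2` of the two ancilla qubits. -/
def phiPlus : EuclideanSpace ℂ (Fin 2 → Fin 2) :=
  ofFun fun z => if z 0 = z 1 then (Real.sqrt 2 : ℂ)⁻¹ else 0

/-- The post-measurement state
`|Ψ_{s,x}⟩ = (|x⟩|x₂x₂⟩_{ab} + s|x̄⟩|x̄₂x̄₂⟩_{ab})/√2`. -/
def bigPsi (s : Bool) (x : Fin 4 → Fin 2) : K4 :=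
  (Real.sqrt 2 : ℂ)⁻¹ •
    (tensE (ketQ x) (ket2 fun _ => x 1) +
      sgn s • tensE (ketQ (bcompl x)) (ket2 fun _ => x 1 + 1))

/-- The projection `Π_{Bb} = |00⟩⟨00| + |11⟩⟨11|` on the pair `(B, b)`. -/
def projBb : Module.End ℂ K4 := diagP fun p => p.1 1 = p.2 1

/-- The projection `Π_{Aa} = |00⟩⟨00| + |11⟩⟨11|` on the pair `(A, a)`. -/
def projAa : Module.End ℂ K4 := diagP fun p => p.1 0 = p.2 0

/-- The projection `|0⟩⟨0|_A ⊗ I`. -/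
def proj0A : Module.End ℂ K4 := diagP fun p => p.1 0 = 0

/-- The CNOT gate with control the main qubit at position `c` and target the main
qubit `A` (position `0`), acting as the identity on the ancillas. -/
def cnotK (c : Fin 4) : Module.End ℂ K4 :=
  permE fun p => (Function.update p.1 0 (p.1 0 + p.1 c), p.2)




open Classical in
lemma diagP_apply {ι : Type*} [Fintype ι] (f : ι → Prop) (v : EuclideanSpace ℂ ι) (p : ι) :
    diagP f v p = if f p then v p else 0 := by
  simp only [diagP, toE, LinearMap.coe_comp, Function.comp_apply, LinearEquiv.coe_coe,
    WithLp.linearEquiv_apply, WithLp.linearEquiv_symm_apply, LinearMap.pi_apply,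
    LinearMap.smul_apply, LinearMap.proj_apply, smul_eq_mul]
  by_cases h : f p <;> simp [h] <;> rfl

lemma tensE_apply {ι κ : Type*} [Fintype ι] [Fintype κ]
    (u : EuclideanSpace ℂ ι) (w : EuclideanSpace ℂ κ) (p : ι × κ) :
    tensE u w p = u p.1 * w p.2 := rfl

lemma ketQ_apply {n : ℕ} (x v : Fin n → Fin 2) :
    ketQ x v = if v = x then 1 else 0 := by
  simp [ketQ, EuclideanSpace.single_apply]

lemma tensE_single {ι κ : Type*} [Fintype ι] [Fintype κ] [DecidableEq ι] [DecidableEq κ]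
    (a : ι) (b : κ) :
    tensE (EuclideanSpace.single a (1:ℂ)) (EuclideanSpace.single b (1:ℂ))
      = EuclideanSpace.single (a, b) (1:ℂ) := by
  ext p
  rw [tensE_apply]
  by_cases h1 : p.1 = a <;> by_cases h2 : p.2 = b <;>
    simp [EuclideanSpace.single_apply, Prod.ext_iff, h1, h2]

lemma bigPsi_eq (s : Bool) (x : Fin 4 → Fin 2) :
    bigPsi s x = (Real.sqrt 2 : ℂ)⁻¹ •
      (EuclideanSpace.single (x, fun _ => x 1) (1:ℂ) +
        sgn s • EuclideanSpace.single (bcompl x, fun _ => x 1 + 1) (1:ℂ)) := by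
  rw [bigPsi, ketQ, ketQ, ket2, ket2, tensE_single, tensE_single]

lemma inner_single_single {ι : Type*} [Fintype ι] [DecidableEq ι] (i j : ι) :
    ⟪EuclideanSpace.single i (1:ℂ), EuclideanSpace.single j (1:ℂ)⟫_ℂ
      = if i = j then 1 else 0 := by
  rw [EuclideanSpace.inner_single_left]
  simp [EuclideanSpace.single_apply, eq_comm]

lemma conj_sgn (s : Bool) : (starRingEnd ℂ) (sgn s) = sgn s := by cases s <;> simp [sgn]

lemma sqrt2_sq : ((Real.sqrt 2 : ℝ) : ℂ) * ((Real.sqrt 2 : ℝ) : ℂ) = 2 := by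
  rw [← Complex.ofReal_mul, Real.mul_self_sqrt (by norm_num)]
  norm_num

lemma sqrt2_ne : ((Real.sqrt 2 : ℝ) : ℂ) ≠ 0 := by
  simpa using Real.sqrt_ne_zero'.mpr (by norm_num : (0:ℝ) < 2)

lemma inner_bigPsi (s t : Bool) (x y : Fin 4 → Fin 2) (hx : x 0 = 0) (hy : y 0 = 0) :
    ⟪bigPsi s x, bigPsi t y⟫_ℂ = if s = t ∧ x = y then 1 else 0 := by
  have h1 : ((x, fun _ => x 1) = ((y, fun _ => y 1) : (Fin 4 → Fin 2) × (Fin 2 → Fin 2)))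
      ↔ x = y := by
    constructor
    · intro h; exact (Prod.ext_iff.mp h).1
    · rintro rfl; rfl
  have h4 : ((bcompl x, fun _ => x 1 + 1)
        = ((bcompl y, fun _ => y 1 + 1) : (Fin 4 → Fin 2) × (Fin 2 → Fin 2))) ↔ x = y := by
    constructor
    · intro h
      funext i
      have := congrFun (Prod.ext_iff.mp h).1 i
      simp only [bcompl] at this
      exact add_right_cancel this
    · rintro rfl; rfl
  have h2 : ((x, fun _ => x 1) : (Fin 4 → Fin 2) × (Fin 2 → Fin 2))
      ≠ (bcompl y, fun _ => y 1 + 1) := by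
    intro h
    have h0 : x 0 = y 0 + 1 := congrFun (congrArg Prod.fst h) 0
    rw [hx, hy] at h0
    exact absurd h0 (by decide)
  have h3 : ((bcompl x, fun _ => x 1 + 1) : (Fin 4 → Fin 2) × (Fin 2 → Fin 2))
      ≠ (y, fun _ => y 1) := by
    intro h
    have h0 : x 0 + 1 = y 0 := congrFun (congrArg Prod.fst h) 0
    rw [hx, hy] at h0
    exact absurd h0 (by decide)
  rw [bigPsi_eq, bigPsi_eq]
  simp only [inner_smul_left, inner_smul_right, inner_add_left, inner_add_right,
    inner_single_single, map_inv₀, Complex.conj_ofReal, conj_sgn,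
    if_neg h2, if_neg h3, h1, h4]
  by_cases hxy : x = y
  · subst hxy
    simp only [if_pos rfl, and_true]
    cases s <;> cases t <;>
      simp [sgn] <;>
      field_simp <;>
      linear_combination -sqrt2_sq
  · simp [hxy]

lemma phiPlus_apply (z : Fin 2 → Fin 2) :
    phiPlus z = if z 0 = z 1 then (Real.sqrt 2 : ℂ)⁻¹ else 0 := rfl

/-- Step 1 of Theorem 1: `Π_{Bb}(|ψ_s⟩_x ⊗ |φ⁺⟩_{ab}) = (1/√2)|Ψ_{s,x}⟩`,
and the 16 states `|Ψ_{s,x}⟩` form an orthonormal family. -/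
theorem thm1_step1_orthogonality_preserving :
    (∀ (s : Bool) (x : Fin 4 → Fin 2), x 0 = 0 →
      projBb (tensE (ghz s x) phiPlus) = (Real.sqrt 2 : ℂ)⁻¹ • bigPsi s x) ∧
    Orthonormal ℂ (fun p : Bool × {x : Fin 4 → Fin 2 // x 0 = 0} => bigPsi p.1 p.2.1) := by
  constructor
  · intro s x hx
    have hxne : x ≠ bcompl x := by
      intro h
      have := congrFun h 0
      rw [hx] at this
      simp only [bcompl, hx] at this
      exact absurd this (by decide)
    ext p
    obtain ⟨a, z⟩ := p
    show projBb (tensE (ghz s x) phiPlus) (a, z) = _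
    rw [projBb, diagP_apply]
    rw [bigPsi_eq]
    simp only [tensE_apply, ghz, phiPlus_apply, PiLp.smul_apply, PiLp.add_apply,
      smul_eq_mul, ketQ_apply, EuclideanSpace.single_apply, Prod.mk.injEq,
      funext_iff, Fin.forall_fin_two]
    have haux : ∀ u v : Fin 2, u = v + 1 ↔ ¬ u = v := by decide
    by_cases h1 : a = x
    · subst h1
      have hfa : ¬ ∀ i, a i = bcompl a i := fun h => hxne (funext h)
      simp only [eq_self_iff_true, forall_const, if_true, hfa, false_and, if_false,
        mul_zero, add_zero, mul_one, true_and]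
      split_ifs <;> simp_all <;> ring
    · have hfa : ¬ ∀ i, a i = x i := fun h => h1 (funext h)
      by_cases h2 : a = bcompl x
      · subst h2
        have hfb : ∀ i, bcompl x i = bcompl x i := fun _ => rfl
        have hb1 : bcompl x 1 = x 1 + 1 := rfl
        simp only [hfa, false_and, if_false, hfb, forall_const, if_true, true_and,
          zero_add, hb1, mul_one]
        clear hfa hfb hb1 hxne h1 haux hx
        split_ifs <;> simp_all <;> ring
      · have hfb : ¬ ∀ i, a i = bcompl x i := fun h => h2 (funext h)
        simp [hfa, hfb]
  · rw [orthonormal_iff_ite]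
    rintro ⟨s, ⟨x, hx⟩⟩ ⟨t, ⟨y, hy⟩⟩
    rw [inner_bigPsi s t x y hx hy]
    simp [Prod.ext_iff, Subtype.ext_iff]
end
end

section
/- All the states of set (5) are nonzero and pairwise orthogonal: any two distinct states drawn from the union H₁ ∪ H₂ ∪ … ∪ H₁₀ (including two distinct states from the same family) have inner product zero in (ℂ^d)^{⊗5}. -/
noncomputable section

/-- The root of unity `ω_n = e^{2πi/n}`. -/
def omegaC (n : ℕ) : ℂ := Complex.exp (2 * Real.pi * Complex.I / n)

/-- Computational basis vector `|k⟩` of `ℂ^d`. -/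
def ketD (d k : ℕ) : EuclideanSpace ℂ (Fin d) :=
  ofFun fun u => if (u : ℕ) = k then 1 else 0

/-- The (unnormalized) vector `|α_i⟩ = Σ_{u=0}^{d−1} ω_d^{iu}|u⟩`. -/
def alphaD (d i : ℕ) : EuclideanSpace ℂ (Fin d) :=
  ofFun fun u => omegaC d ^ (i * (u : ℕ))

/-- The (unnormalized) vector `|γ_m⟩ = Σ_{u=0}^{d−2} ω_{d−1}^{mu}|u+1⟩`. -/
def gammaD (d m : ℕ) : EuclideanSpace ℂ (Fin d) :=
  ofFun fun u => if (u : ℕ) = 0 then 0 else omegaC (d - 1) ^ (m * ((u : ℕ) - 1))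

/-- Tensor product of five vectors of `ℂ^d`, realized on the index set `Fin 5 → Fin d`. -/
def tp5 {d : ℕ} (v0 v1 v2 v3 v4 : EuclideanSpace ℂ (Fin d)) :
    EuclideanSpace ℂ (Fin 5 → Fin d) :=
  ofFun fun x => v0 (x 0) * v1 (x 1) * v2 (x 2) * v3 (x 3) * v4 (x 4)

/-- The states of set (5): family `k : Fin 10` corresponds to `H_{k+1}`; the parameter
`a` is the spectral parameter (`i ∈ ℤ_d` for `H₁,…,H₅`, `m ∈ ℤ_{d−1}` for `H₆,…,H₁₀`),
and `p` is the index of the computational basis vector `|p⟩ ∈ {|1⟩,…,|d−1⟩}`. -/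
def stateOf (d : ℕ) (k : Fin 10) (a p : ℕ) : EuclideanSpace ℂ (Fin 5 → Fin d) :=
  if k = 0 then tp5 (alphaD d a) (alphaD d a) (ketD d p) (ketD d 0) (ketD d 0)
  else if k = 1 then tp5 (alphaD d a) (ketD d p) (ketD d 0) (ketD d 0) (alphaD d a)
  else if k = 2 then tp5 (ketD d p) (ketD d 0) (ketD d 0) (alphaD d a) (alphaD d a)
  else if k = 3 then tp5 (ketD d 0) (ketD d 0) (alphaD d a) (alphaD d a) (ketD d p)
  else if k = 4 then tp5 (ketD d 0) (alphaD d a) (alphaD d a) (ketD d p) (ketD d 0)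
  else if k = 5 then tp5 (gammaD d a) (ketD d 0) (ketD d p) (ketD d 0) (ketD d 1)
  else if k = 6 then tp5 (ketD d 0) (ketD d p) (ketD d 0) (ketD d 1) (gammaD d a)
  else if k = 7 then tp5 (ketD d p) (ketD d 0) (ketD d 1) (gammaD d a) (ketD d 0)
  else if k = 8 then tp5 (ketD d 0) (ketD d 1) (gammaD d a) (ketD d 0) (ketD d p)
  else tp5 (ketD d 1) (gammaD d a) (ketD d 0) (ketD d p) (ketD d 0)

/-- Ranges of the parameters of the states of set (5). -/
def validIdx (d : ℕ) (k : Fin 10) (a p : ℕ) : Prop :=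
  (if (k : ℕ) < 5 then a < d else a < d - 1) ∧ 1 ≤ p ∧ p < d

lemma roots_sum (n : ℕ) (i i' : ℕ) (hi : i < n) (hi' : i' < n) :
    ∑ u ∈ Finset.range n, ((starRingEnd ℂ) (omegaC n ^ (i * u)) * omegaC n ^ (i' * u))
      = if i = i' then (n : ℂ) else 0 := by
  have hn : 0 < n := by omega
  have hprim : IsPrimitiveRoot (omegaC n) n := Complex.isPrimitiveRoot_exp n (by omega)
  have hone : omegaC n ^ n = 1 := hprim.pow_eq_one
  have hinv : (starRingEnd ℂ) (omegaC n) = omegaC n ^ (n - 1) := by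
    have h1 : (starRingEnd ℂ) (omegaC n) = (omegaC n)⁻¹ := by
      rw [omegaC, ← Complex.exp_conj, ← Complex.exp_neg]
      congr 1
      simp [map_div₀, Complex.conj_I, map_ofNat]
      ring
    rw [h1]
    refine (eq_inv_of_mul_eq_one_left ?_).symm
    rw [← pow_succ, Nat.sub_add_cancel (by omega)]
    exact hone
  have key : ∀ u, (starRingEnd ℂ) (omegaC n ^ (i * u)) * omegaC n ^ (i' * u)
      = (omegaC n ^ ((n - 1) * i + i')) ^ u := by
    intro u
    rw [map_pow, hinv, ← pow_mul, ← pow_add, ← pow_mul]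
    congr 1
    ring
  simp only [key]
  set z := omegaC n ^ ((n - 1) * i + i') with hz
  have hzn : z ^ n = 1 := by
    rw [hz, ← pow_mul, mul_comm, pow_mul, hone, one_pow]
  by_cases h : i = i'
  · subst h
    have hz1 : z = 1 := by
      have e : (n-1)*i + i = n*i := by
        cases n with
        | zero => omega
        | succ e => simp [Nat.succ_sub_one, Nat.succ_mul]
      rw [hz, e, pow_mul, hone, one_pow]
    simp [hz1]
  · have hz1 : z ≠ 1 := by
      rw [hz, Ne, hprim.pow_eq_one_iff_dvd]
      intro hdvd
      have h2 : (n : ℤ) ∣ ((n : ℤ) - 1) * i + i' := by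
        have := Int.natCast_dvd_natCast.mpr hdvd
        push_cast [Nat.cast_sub (by omega : 1 ≤ n)] at this
        convert this using 2
      have h3 : (n : ℤ) ∣ ((i' : ℤ) - i) := by
        have he : ((i' : ℤ) - i) = (((n:ℤ) - 1) * i + i') - n * i := by ring
        rw [he]
        exact dvd_sub h2 ⟨i, rfl⟩
      have h4 : ((i' : ℤ) - i) = 0 :=
        Int.eq_zero_of_abs_lt_dvd h3 (by rw [abs_lt]; constructor <;> push_cast <;> omega)
      apply h; omega
    rw [geom_sum_eq hz1, hzn, sub_self, zero_div, if_neg h]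


lemma inner_ketD (d p q : ℕ) :
    (inner ℂ (ketD d p) (ketD d q) : ℂ) = if p = q ∧ p < d then 1 else 0 := by
  simp only [PiLp.inner_apply, RCLike.inner_apply', ketD, ofFun]
  rw [Fin.sum_univ_eq_sum_range
    (fun u => (starRingEnd ℂ) (if u = p then (1:ℂ) else 0) * (if u = q then (1:ℂ) else 0))]
  by_cases hpq : p = q
  · subst hpq
    have h1 : ∀ u : ℕ, (starRingEnd ℂ) (if u = p then (1:ℂ) else 0) * (if u = p then (1:ℂ) else 0)
        = if u = p then (1:ℂ) else 0 := by
      intro u; split_ifs <;> simp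
    simp only [h1, Finset.sum_ite_eq' (Finset.range d) p (fun _ => (1:ℂ)), Finset.mem_range,
      true_and]
  · rw [if_neg (by tauto)]
    apply Finset.sum_eq_zero
    intro u _
    by_cases h1 : u = p <;> by_cases h2 : u = q <;> simp [h1, h2] <;> omega

lemma inner_alphaD (d : ℕ) (hd : 0 < d) (i i' : ℕ) (hi : i < d) (hi' : i' < d) :
    (inner ℂ (alphaD d i) (alphaD d i') : ℂ) = if i = i' then (d : ℂ) else 0 := by
  simp only [PiLp.inner_apply, RCLike.inner_apply', alphaD, ofFun]
  rw [Fin.sum_univ_eq_sum_range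
    (fun u => (starRingEnd ℂ) (omegaC d ^ (i * u)) * omegaC d ^ (i' * u))]
  exact roots_sum d i i' hi hi'

lemma inner_gammaD (d : ℕ) (hd : 3 ≤ d) (m m' : ℕ) (hm : m < d - 1) (hm' : m' < d - 1) :
    (inner ℂ (gammaD d m) (gammaD d m') : ℂ) = if m = m' then ((d - 1 : ℕ) : ℂ) else 0 := by
  simp only [PiLp.inner_apply, RCLike.inner_apply', gammaD, ofFun]
  rw [Fin.sum_univ_eq_sum_range
    (fun u => (starRingEnd ℂ) (if u = 0 then 0 else omegaC (d-1) ^ (m * (u - 1)))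
      * (if u = 0 then 0 else omegaC (d-1) ^ (m' * (u - 1))))]
  obtain ⟨e, he⟩ : ∃ e, d = e + 1 := ⟨d - 1, by omega⟩
  subst he
  rw [Finset.sum_range_succ']
  simp only [Nat.succ_ne_zero, if_false, if_true, Nat.add_sub_cancel, map_zero, zero_mul,
    mul_zero, add_zero, if_pos rfl]
  exact roots_sum e m m' (by omega) (by omega)

lemma inner_ket0_gammaD (d m : ℕ) : (inner ℂ (ketD d 0) (gammaD d m) : ℂ) = 0 := by
  simp only [PiLp.inner_apply, RCLike.inner_apply', ketD, gammaD, ofFun]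
  apply Finset.sum_eq_zero; intro u _
  by_cases h : (u : ℕ) = 0 <;> simp [h]

lemma inner_gammaD_ket0 (d m : ℕ) : (inner ℂ (gammaD d m) (ketD d 0) : ℂ) = 0 := by
  simp only [PiLp.inner_apply, RCLike.inner_apply', ketD, gammaD, ofFun]
  apply Finset.sum_eq_zero; intro u _
  by_cases h : (u : ℕ) = 0 <;> simp [h]

lemma inner_tp5 {d : ℕ} (a b c e f a' b' c' e' f' : EuclideanSpace ℂ (Fin d)) :
    (inner ℂ (tp5 a b c e f) (tp5 a' b' c' e' f') : ℂ) =
      (inner ℂ a a' : ℂ) * inner ℂ b b' * inner ℂ c c' * inner ℂ e e' * inner ℂ f f' := by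
  classical
  simp only [PiLp.inner_apply, RCLike.inner_apply']
  have : ∀ x : Fin 5 → Fin d,
      (starRingEnd ℂ) (tp5 a b c e f x) * (tp5 a' b' c' e' f' x)
        = ∏ j : Fin 5, ((starRingEnd ℂ) ((![a,b,c,e,f]) j (x j)) * ((![a',b',c',e',f']) j (x j))) := by
    intro x
    simp only [tp5, ofFun, Fin.prod_univ_five, Matrix.cons_val_zero, Matrix.cons_val_one,
      Matrix.head_cons, Matrix.cons_val_two, Matrix.tail_cons, Matrix.cons_val_three,
      Matrix.cons_val_four, map_mul]
    ring
  simp only [this]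
  have h2 := Finset.prod_univ_sum (κ := fun _ : Fin 5 => Fin d) (fun _ => Finset.univ)
      (fun j u => (starRingEnd ℂ) ((![a,b,c,e,f]) j u) * ((![a',b',c',e',f']) j u))
  rw [Fintype.piFinset_univ] at h2
  rw [← h2, Fin.prod_univ_five]
  simp

/-- All the states of set (5) are nonzero and pairwise orthogonal. -/
theorem set5_nonzero_pairwise_orthogonal (d : ℕ) (hd : 3 ≤ d) :
    (∀ (k : Fin 10) (a p : ℕ), validIdx d k a p → stateOf d k a p ≠ 0) ∧
    (∀ (k k' : Fin 10) (a p a' p' : ℕ), validIdx d k a p → validIdx d k' a' p' →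
      (k, a, p) ≠ (k', a', p') →
      (inner ℂ (stateOf d k a p) (stateOf d k' a' p') : ℂ) = 0) := by
  have hd0 : 0 < d := by omega
  have hdC : (d : ℂ) ≠ 0 := Nat.cast_ne_zero.2 (by omega)
  have hd1C : ((d - 1 : ℕ) : ℂ) ≠ 0 := Nat.cast_ne_zero.2 (by omega)
  have h1d : 1 < d := by omega
  constructor
  · rintro k a p ⟨ha, hp1, hp2⟩ h0
    have hk : k = 0 ∨ k = 1 ∨ k = 2 ∨ k = 3 ∨ k = 4 ∨ k = 5 ∨ k = 6 ∨ k = 7 ∨ k = 8 ∨ k = 9 := by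
      fin_cases k <;> decide
    have h : (inner ℂ (stateOf d k a p) (stateOf d k a p) : ℂ) ≠ 0 := by
      rcases hk with rfl|rfl|rfl|rfl|rfl|rfl|rfl|rfl|rfl|rfl <;>
      first
      | (simp only [stateOf, Fin.reduceEq, reduceIte, inner_tp5, inner_ketD,
          inner_alphaD d hd0 a a ha ha, eq_self_iff_true, if_true, if_false, true_and, and_true,
          hd0, h1d, hp2, mul_one, one_mul, mul_eq_zero, hdC, or_self, not_false_eq_true,
          or_false, false_or, ne_eq]; done)
      | (simp only [stateOf, Fin.reduceEq, reduceIte, inner_tp5, inner_ketD,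
          inner_gammaD d hd a a ha ha, eq_self_iff_true, if_true, if_false, true_and, and_true,
          hd0, h1d, hp2, mul_one, one_mul, mul_eq_zero, hd1C, or_self, not_false_eq_true,
          or_false, false_or, ne_eq]; done)
    exact h (by rw [h0]; simp)
  · rintro k k' a p a' p' ⟨ha, hp1, hp2⟩ ⟨ha', hp1', hp2'⟩ hne
    have hp0 : p ≠ 0 := by omega
    have hp0' : p' ≠ 0 := by omega
    have hk : k = 0 ∨ k = 1 ∨ k = 2 ∨ k = 3 ∨ k = 4 ∨ k = 5 ∨ k = 6 ∨ k = 7 ∨ k = 8 ∨ k = 9 := by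
      fin_cases k <;> decide
    have hk' : k' = 0 ∨ k' = 1 ∨ k' = 2 ∨ k' = 3 ∨ k' = 4 ∨ k' = 5 ∨ k' = 6 ∨ k' = 7 ∨ k' = 8 ∨ k' = 9 := by
      fin_cases k' <;> decide
    rcases hk with rfl|rfl|rfl|rfl|rfl|rfl|rfl|rfl|rfl|rfl <;>
      rcases hk' with rfl|rfl|rfl|rfl|rfl|rfl|rfl|rfl|rfl|rfl <;>
      first
      | (simp only [stateOf, Fin.reduceEq, reduceIte, inner_tp5, inner_ketD,
          inner_ket0_gammaD, inner_gammaD_ket0, Nat.reduceEqDiff, eq_self_iff_true,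
          if_true, if_false, true_and, and_true, false_and, and_false,
          mul_zero, zero_mul, mul_one, one_mul, hp0, hp0', Ne.symm hp0, Ne.symm hp0']; done)
      | (rcases eq_or_ne a a' with rfl | hab
         · have hpp : p ≠ p' := fun h => hne (by rw [h])
           simp only [stateOf, Fin.reduceEq, reduceIte, inner_tp5, inner_ketD, hpp,
             if_true, if_false, true_and, and_true, false_and, and_false,
             mul_zero, zero_mul, mul_one, one_mul]
           done
         · first
           | (simp only [stateOf, Fin.reduceEq, reduceIte, inner_tp5, inner_ketD,
               inner_alphaD d hd0 a a' ha ha', hab, if_true, if_false, true_and, and_true,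
               false_and, and_false, mul_zero, zero_mul, mul_one, one_mul]; done)
           | (simp only [stateOf, Fin.reduceEq, reduceIte, inner_tp5, inner_ketD,
               inner_gammaD d hd a a' ha ha', hab, if_true, if_false, true_and, and_true,
               false_and, and_false, mul_zero, zero_mul, mul_one, one_mul]; done))
end
end
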